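/- arXiv:2009.01497 — 2 statements merged into one kernel-verified Lean document; each statement's English description precedes it below -/
import Mathlib

section
/- Let w ∈ V_G be a root in G' with layer sequence {X_i}. Then, with probability at least 1 − polylog(n)/n³, the total size of the tree rooted at w satisfies Σ_i X_i = O(log n · log log n). -/
/-!
STATEMENT 7 (Lemma 6, tree bound).

Setting as in Lemma 2 (layers `L_i`, `X_i = |L_i|` of the tree of `G'` rooted at a
good node `w`).  Claim: with probability at least `1 - polylog(n)/n³`, the total size
of the tree rooted at `w` satisfies `Σ_i X_i = O(log n · log log n)`.

(The layers are pairwise disjoint subsets of `Fin n`, so `L_i = ∅` for `i > n + 1`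
and the sum over `i ≤ n + 1` is the full sum `Σ_i X_i`.)
-/

open scoped Classical
open Finset

noncomputable section

/-- `lg` denotes the base-2 logarithm (the paper's `log`). -/
def lg (x : ℝ) : ℝ := Real.logb 2 x

abbrev NodeOrder (n : ℕ) (d : Fin n) : Type := Fin (n - 1) ≃ {v : Fin n // v ≠ d}

def unifProb {Ω : Type*} [Fintype Ω] (P : Ω → Prop) : ℝ :=
  ((Finset.univ : Finset Ω).filter P).card / (Fintype.card Ω : ℝ)

def firstElem {n : ℕ} {d : Fin n} (π : NodeOrder n d) : Fin n :=
  if h : 0 < n - 1 then (π ⟨0, h⟩).1 else d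

def succG {n : ℕ} {d : Fin n} (VB : Finset (Fin n))
    (ω : Fin n → NodeOrder n d) (v : Fin n) : Fin n :=
  if v ∈ VB then firstElem (ω v) else v

def layerAux {n : ℕ} (VB : Finset (Fin n)) (f : Fin n → Fin n) (w : Fin n) :
    ℕ → Finset (Fin n) × Finset (Fin n)
  | 0 => ({w}, {w})
  | i + 1 =>
      let p := layerAux VB f w i
      let L := VB.filter fun v => f v ∈ p.1 ∧ v ∉ p.2
      (L, p.2 ∪ L)

def layer {n : ℕ} (VB : Finset (Fin n)) (f : Fin n → Fin n) (w : Fin n) (i : ℕ) :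
    Finset (Fin n) :=
  (layerAux VB f w i).1

section PartA
variable {n : ℕ} (VB : Finset (Fin n)) (f : Fin n → Fin n) (w : Fin n)

lemma layer_zero : layer VB f w 0 = {w} := rfl

lemma layer_succ (i : ℕ) :
    layer VB f w (i+1)
      = VB.filter (fun v => f v ∈ layer VB f w i ∧ v ∉ (layerAux VB f w i).2) := rfl

lemma layerAux_snd_succ (i : ℕ) :
    (layerAux VB f w (i+1)).2 = (layerAux VB f w i).2 ∪ layer VB f w (i+1) := rfl

lemma mem_snd_iff (i : ℕ) (v : Fin n) :
    v ∈ (layerAux VB f w i).2 ↔ ∃ j ≤ i, v ∈ layer VB f w j := by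
  induction i with
  | zero => simp [layerAux, layer]
  | succ i ih =>
      rw [layerAux_snd_succ, mem_union, ih]
      constructor
      · rintro (⟨j, hj, hv⟩ | hv)
        · exact ⟨j, hj.trans (Nat.le_succ i), hv⟩
        · exact ⟨i+1, le_refl _, hv⟩
      · rintro ⟨j, hj, hv⟩
        rcases Nat.lt_or_ge j (i+1) with h | h
        · exact Or.inl ⟨j, Nat.lt_succ_iff.mp h, hv⟩
        · exact Or.inr (by rwa [Nat.le_antisymm hj h] at hv)

lemma layer_subset_VB (i : ℕ) : layer VB f w (i+1) ⊆ VB := by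
  rw [layer_succ]; exact filter_subset _ _

lemma layer_disjoint_snd (i : ℕ) :
    ∀ v ∈ layer VB f w (i+1), v ∉ (layerAux VB f w i).2 := by
  intro v hv
  rw [layer_succ, mem_filter] at hv
  exact hv.2.2

lemma layer_pairwise_disjoint {i j : ℕ} (hij : i < j) :
    Disjoint (layer VB f w i) (layer VB f w j) := by
  rw [Finset.disjoint_left]
  intro v hvi hvj
  obtain ⟨m, rfl⟩ : ∃ m, j = m + 1 := ⟨j - 1, (Nat.succ_pred_eq_of_pos (Nat.pos_of_ne_zero (by omega))).symm⟩
  exact layer_disjoint_snd VB f w m v hvj ((mem_snd_iff VB f w m v).mpr ⟨i, Nat.lt_succ_iff.mp hij, hvi⟩)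

lemma layer_empty_succ {i : ℕ} (h : layer VB f w i = ∅) : layer VB f w (i+1) = ∅ := by
  rw [layer_succ, h]
  simp

lemma layer_nonempty_of_le {i j : ℕ} (hij : i ≤ j) (h : (layer VB f w j).Nonempty) :
    (layer VB f w i).Nonempty := by
  by_contra hcon
  rw [Finset.not_nonempty_iff_eq_empty] at hcon
  have : layer VB f w j = ∅ := by
    clear h
    induction j with
    | zero =>
        have : i = 0 := Nat.le_zero.mp hij
        rwa [this] at hcon
    | succ j ih =>
        rcases Nat.lt_or_ge i (j+1) with h' | h'
        · exact layer_empty_succ VB f w (ih (Nat.lt_succ_iff.mp h'))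
        · exact (Nat.le_antisymm hij h') ▸ hcon
  exact (Finset.not_nonempty_iff_eq_empty.mpr this) h

lemma mem_layer_succ_iff {i : ℕ} {v : Fin n} :
    v ∈ layer VB f w (i+1) ↔ v ∈ VB ∧ f v ∈ layer VB f w i ∧ v ∉ (layerAux VB f w i).2 := by
  rw [layer_succ, mem_filter]

end PartA
section PartA2
variable {n : ℕ} (VB : Finset (Fin n)) (f : Fin n → Fin n) (w : Fin n)

def treeSet : Finset (Fin n) := (range (n+2)).biUnion (layer VB f w)

lemma sum_layers_eq_card :
    ∑ i ∈ range (n+2), (layer VB f w i).card = (treeSet VB f w).card := by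
  rw [treeSet, card_biUnion]
  intro x _ y _ hxy
  rcases Nat.lt_or_ge x y with h | h
  · exact layer_pairwise_disjoint VB f w h
  · exact (layer_pairwise_disjoint VB f w (by omega)).symm

lemma w_mem_treeSet : w ∈ treeSet VB f w := by
  rw [treeSet, mem_biUnion]
  exact ⟨0, by simp, by rw [layer_zero]; exact mem_singleton_self w⟩

lemma layer_np1_empty : layer VB f w (n+1) = ∅ := by
  by_contra h
  rw [← Finset.not_nonempty_iff_eq_empty, not_not] at h
  have hall : ∀ i ∈ range (n+2), 1 ≤ (layer VB f w i).card := by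
    intro i hi
    rw [mem_range] at hi
    exact Finset.card_pos.mpr (layer_nonempty_of_le VB f w (Nat.lt_succ_iff.mp hi) h)
  have h1 : n + 2 ≤ ∑ i ∈ range (n+2), (layer VB f w i).card := by
    calc n + 2 = ∑ _i ∈ range (n+2), 1 := by simp
    _ ≤ _ := Finset.sum_le_sum hall
  have h2 : (treeSet VB f w).card ≤ n := by
    calc (treeSet VB f w).card ≤ (univ : Finset (Fin n)).card := Finset.card_le_card (subset_univ _)
    _ = n := by simp
  rw [sum_layers_eq_card] at h1
  omega
lemma mem_treeSet_spec {v : Fin n} (hv : v ∈ treeSet VB f w) (hvw : v ≠ w) :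
    v ∈ VB ∧ f v ∈ treeSet VB f w := by
  rw [treeSet, mem_biUnion] at hv
  obtain ⟨i, hi, hvl⟩ := hv
  match i with
  | 0 =>
      rw [layer_zero, mem_singleton] at hvl
      exact absurd hvl hvw
  | j + 1 =>
      rw [mem_layer_succ_iff] at hvl
      refine ⟨hvl.1, ?_⟩
      rw [treeSet, mem_biUnion]
      rw [mem_range] at hi
      exact ⟨j, mem_range.mpr (by omega), hvl.2.1⟩

lemma treeSet_closed {v : Fin n} (hv : v ∈ VB) (hnv : v ∉ treeSet VB f w) :
    f v ∉ treeSet VB f w := by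
  intro hfv
  rw [treeSet, mem_biUnion] at hfv
  obtain ⟨i, hi, hfl⟩ := hfv
  rw [mem_range] at hi
  have hin : i ≤ n := by
    by_contra h
    have : i = n + 1 := by omega
    rw [this, layer_np1_empty] at hfl
    exact absurd hfl (Finset.notMem_empty _)
  have hvsnd : v ∉ (layerAux VB f w i).2 := by
    intro hmem
    rw [mem_snd_iff] at hmem
    obtain ⟨j, hj, hvj⟩ := hmem
    exact hnv (by rw [treeSet, mem_biUnion]; exact ⟨j, mem_range.mpr (by omega), hvj⟩)
  have : v ∈ layer VB f w (i+1) := (mem_layer_succ_iff VB f w).mpr ⟨hv, hfl, hvsnd⟩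
  exact hnv (by rw [treeSet, mem_biUnion]; exact ⟨i+1, mem_range.mpr (by omega), this⟩)

lemma treeSet_sdiff_subset : (treeSet VB f w).erase w ⊆ VB := by
  intro v hv
  rw [mem_erase] at hv
  exact (mem_treeSet_spec VB f w hv.2 hv.1).1

end PartA2

section PartB
variable {n : ℕ} {d : Fin n}

def i0 (hn : 2 ≤ n) : Fin (n - 1) := ⟨0, by omega⟩

lemma firstElem_eq (hn : 2 ≤ n) (π : NodeOrder n d) :
    firstElem π = (π (i0 hn)).1 := by
  rw [firstElem, dif_pos (by omega : 0 < n - 1)]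
  rfl

def Fb (hn : 2 ≤ n) (x : {v : Fin n // v ≠ d}) : Finset (NodeOrder n d) :=
  univ.filter (fun π => π (i0 hn) = x)

lemma fiber_card_eq (hn : 2 ≤ n) (x y : {v : Fin n // v ≠ d}) :
    (Fb hn x).card = (Fb hn y).card := by
  apply Finset.card_nbij' (i := fun π => π.trans (Equiv.swap x y))
    (j := fun π => π.trans (Equiv.swap x y))
  · intro π hπ
    rw [Fb, mem_coe, mem_filter] at hπ ⊢
    refine ⟨mem_univ _, ?_⟩
    simp [hπ.2]
  · intro π hπ
    rw [Fb, mem_coe, mem_filter] at hπ ⊢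
    refine ⟨mem_univ _, ?_⟩
    simp only [Equiv.trans_apply, hπ.2]
    exact Equiv.swap_apply_right x y
  · intro π _
    ext i
    simp
  · intro π _
    ext i
    simp

lemma count_mem (hn : 2 ≤ n) (S' : Finset {v : Fin n // v ≠ d}) (y : {v : Fin n // v ≠ d}) :
    (univ.filter (fun π : NodeOrder n d => π (i0 hn) ∈ S')).card = S'.card * (Fb hn y).card := by
  have he : univ.filter (fun π : NodeOrder n d => π (i0 hn) ∈ S') = S'.biUnion (Fb hn) := by
    ext π
    simp only [mem_filter, mem_univ, true_and, mem_biUnion]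
    constructor
    · intro h; exact ⟨π (i0 hn), h, by rw [Fb, mem_filter]; exact ⟨mem_univ _, rfl⟩⟩
    · rintro ⟨x, hx, h⟩
      rw [Fb, mem_filter] at h
      rw [h.2]; exact hx
  rw [he, card_biUnion]
  · rw [Finset.sum_congr rfl (fun x _ => fiber_card_eq hn x y), Finset.sum_const, smul_eq_mul]
  · intro x _ x' _ hxx'
    rw [Function.onFun, Finset.disjoint_left]
    intro π h1 h2
    rw [Fb, mem_filter] at h1 h2
    exact hxx' (h1.2 ▸ h2.2)

lemma card_target (hn : 2 ≤ n) : Fintype.card {v : Fin n // v ≠ d} = n - 1 := by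
  have : Fintype.card {v : Fin n // ¬ (v = d)} = Fintype.card (Fin n) - Fintype.card {v : Fin n // v = d} :=
    Fintype.card_subtype_compl _
  simpa using this

lemma count_total (hn : 2 ≤ n) (y : {v : Fin n // v ≠ d}) :
    Fintype.card (NodeOrder n d) = (n - 1) * (Fb hn y).card := by
  have h1 : univ.filter (fun π : NodeOrder n d => π (i0 hn) ∈ (univ : Finset {v : Fin n // v ≠ d})) = univ := by
    simp
  have h2 := count_mem hn (univ : Finset {v : Fin n // v ≠ d}) y
  rw [h1] at h2
  rw [← card_univ (α := NodeOrder n d), h2, card_univ, card_target hn]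

lemma count_not_mem (hn : 2 ≤ n) (S' : Finset {v : Fin n // v ≠ d}) (y : {v : Fin n // v ≠ d}) :
    (univ.filter (fun π : NodeOrder n d => π (i0 hn) ∉ S')).card
      = (n - 1 - S'.card) * (Fb hn y).card := by
  have hsplit := Finset.card_filter_add_card_filter_not
    (s := (univ : Finset (NodeOrder n d))) (p := fun π => π (i0 hn) ∈ S')
  rw [count_mem hn S' y] at hsplit
  have htot : (univ : Finset (NodeOrder n d)).card = (n - 1) * (Fb hn y).card := by
    rw [card_univ]; exact count_total hn y
  have hS'card : S'.card ≤ n - 1 := by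
    have := Finset.card_le_card (Finset.subset_univ S')
    rwa [card_univ, card_target hn] at this
  rw [Nat.sub_mul]
  omega

end PartB

section PartC
variable {n : ℕ}

def Cnd {d : Fin n} (VB : Finset (Fin n)) (w : Fin n) (S : Finset (Fin n)) (v : Fin n)
    (π : NodeOrder n d) : Prop :=
  (v ∈ S.erase w → firstElem π ∈ S) ∧ (v ∈ VB \ S → firstElem π ∉ S)

def AS (d : Fin n) (VB : Finset (Fin n)) (w : Fin n) (S : Finset (Fin n)) :
    Finset (Fin n → NodeOrder n d) :=
  Fintype.piFinset (fun v => univ.filter (Cnd VB w S v))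

lemma mem_AS_iff {d : Fin n} {VB S : Finset (Fin n)} {w : Fin n} {ω : Fin n → NodeOrder n d} :
    ω ∈ AS d VB w S ↔ ∀ v, Cnd VB w S v (ω v) := by
  rw [AS]
  simp [Fintype.mem_piFinset]

/-- If the tree is the set S, then ω is in A_S. -/
lemma mem_AS_treeSet {d : Fin n} (VB : Finset (Fin n)) (w : Fin n)
    (ω : Fin n → NodeOrder n d) :
    ω ∈ AS d VB w (treeSet VB (succG VB ω) w) := by
  rw [mem_AS_iff]
  intro v
  set f := succG VB ω
  set S := treeSet VB f w
  constructor
  · intro hv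
    rw [mem_erase] at hv
    obtain ⟨hvB, hfv⟩ := mem_treeSet_spec VB f w hv.2 hv.1
    have : f v = firstElem (ω v) := by simp [f, succG, hvB]
    rwa [← this]
  · intro hv
    rw [mem_sdiff] at hv
    have h1 := treeSet_closed VB f w hv.1 hv.2
    have : f v = firstElem (ω v) := by simp [f, succG, hv.1]
    rwa [← this]

lemma firstElem_mem_iff {d : Fin n} (hn : 2 ≤ n) (π : NodeOrder n d) (S : Finset (Fin n)) :
    firstElem π ∈ S ↔ π (i0 hn) ∈ S.subtype (· ≠ d) := by
  rw [firstElem_eq hn, Finset.mem_subtype]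

lemma card_subtype_S {d : Fin n} (S : Finset (Fin n)) (hdS : d ∉ S) :
    (S.subtype (· ≠ d)).card = S.card := by
  rw [Finset.card_subtype, Finset.filter_eq_self.mpr]
  intro v hv
  exact fun h => hdS (h ▸ hv)

lemma AS_card {d : Fin n} (hn : 2 ≤ n) (VB : Finset (Fin n)) (w : Fin n)
    (hw : w ≠ d) (hd : d ∉ VB) (hwB : w ∉ VB)
    {S : Finset (Fin n)} (hwS : w ∈ S) (hSVB : S.erase w ⊆ VB) :
    (AS d VB w S).card
      = (S.card * (Fb hn ⟨w, hw⟩).card) ^ (S.card - 1)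
        * ((n - 1 - S.card) * (Fb hn ⟨w, hw⟩).card) ^ (VB.card - (S.card - 1))
        * ((n - 1) * (Fb hn ⟨w, hw⟩).card) ^ (n - VB.card) := by
  classical
  have hdS : d ∉ S := by
    intro hdmem
    rcases eq_or_ne d w with h | h
    · exact hw h.symm
    · exact hd (hSVB (mem_erase.mpr ⟨h, hdmem⟩))
  set c := (Fb hn ⟨w, hw⟩).card with hc
  set S' := S.subtype (· ≠ d) with hS'
  have h1 : ∀ v ∈ S.erase w,
      (univ.filter (Cnd (d := d) VB w S v)).card = S.card * c := by
    intro v hv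
    have hvS : v ∈ S := (mem_erase.mp hv).2
    have heq : univ.filter (Cnd (d := d) VB w S v)
        = univ.filter (fun π : NodeOrder n d => π (i0 hn) ∈ S') := by
      apply filter_congr
      intro π _
      rw [← firstElem_mem_iff hn π S]
      simp only [Cnd, eq_iff_iff]
      constructor
      · intro h; exact h.1 hv
      · intro h; exact ⟨fun _ => h, fun hmem => absurd hvS (mem_sdiff.mp hmem).2⟩
    rw [heq, count_mem hn S' ⟨w, hw⟩, card_subtype_S S hdS]
  have h2 : ∀ v ∈ VB \ S,
      (univ.filter (Cnd (d := d) VB w S v)).card = (n - 1 - S.card) * c := by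
    intro v hv
    have hvnS : v ∉ S := (mem_sdiff.mp hv).2
    have heq : univ.filter (Cnd (d := d) VB w S v)
        = univ.filter (fun π : NodeOrder n d => π (i0 hn) ∉ S') := by
      apply filter_congr
      intro π _
      rw [← firstElem_mem_iff hn π S]
      simp only [Cnd, eq_iff_iff]
      constructor
      · intro h; exact h.2 hv
      · intro h
        exact ⟨fun hmem => absurd (mem_erase.mp hmem).2 hvnS, fun _ => h⟩
    rw [heq, count_not_mem hn S' ⟨w, hw⟩, card_subtype_S S hdS]
  have h3 : ∀ v ∈ univ \ VB,
      (univ.filter (Cnd (d := d) VB w S v)).card = (n - 1) * c := by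
    intro v hv
    have hvnB : v ∉ VB := (mem_sdiff.mp hv).2
    have hvnE : v ∉ S.erase w := fun hmem => hvnB (hSVB hmem)
    have hvnD : v ∉ VB \ S := fun hmem => hvnB (mem_sdiff.mp hmem).1
    have heq : univ.filter (Cnd (d := d) VB w S v) = univ := by
      rw [Finset.filter_eq_self]
      intro π _
      exact ⟨fun h => absurd h hvnE, fun h => absurd h hvnD⟩
    rw [heq, card_univ, count_total hn ⟨w, hw⟩]
  have hunion : S.erase w ∪ (VB \ S) = VB := by
    ext v
    simp only [mem_union, mem_erase, mem_sdiff]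
    constructor
    · rintro (⟨_, hvS⟩ | ⟨hvB, _⟩)
      · exact hSVB (mem_erase.mpr (by tauto))
      · exact hvB
    · intro hvB
      by_cases hvS : v ∈ S
      · exact Or.inl ⟨fun h => hwB (h ▸ hvB), hvS⟩
      · exact Or.inr ⟨hvB, hvS⟩
  have hdisj : Disjoint (S.erase w) (VB \ S) := by
    rw [Finset.disjoint_left]
    intro v hv1 hv2
    exact (mem_sdiff.mp hv2).2 (mem_erase.mp hv1).2
  have hdisj2 : Disjoint VB (univ \ VB) := Finset.disjoint_sdiff
  have hsplit : (univ : Finset (Fin n)) = (S.erase w ∪ (VB \ S)) ∪ (univ \ VB) := by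
    rw [hunion, Finset.union_sdiff_of_subset (subset_univ _)]
  rw [AS, Fintype.card_piFinset]
  calc ∏ v : Fin n, (univ.filter (Cnd (d := d) VB w S v)).card
      = ∏ v ∈ (S.erase w ∪ (VB \ S)) ∪ (univ \ VB), (univ.filter (Cnd (d := d) VB w S v)).card := by
        rw [← hsplit]
    _ = (∏ v ∈ S.erase w, (univ.filter (Cnd (d := d) VB w S v)).card)
        * (∏ v ∈ VB \ S, (univ.filter (Cnd (d := d) VB w S v)).card)
        * (∏ v ∈ univ \ VB, (univ.filter (Cnd (d := d) VB w S v)).card) := by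
        have hd12 : Disjoint (S.erase w ∪ (VB \ S)) (univ \ VB) := by
          rw [hunion]; exact Finset.disjoint_sdiff
        rw [Finset.prod_union hd12, Finset.prod_union hdisj]
    _ = (S.card * c) ^ (S.erase w).card * ((n - 1 - S.card) * c) ^ (VB \ S).card
        * ((n - 1) * c) ^ (univ \ VB).card := by
        rw [Finset.prod_congr rfl h1, Finset.prod_congr rfl h2, Finset.prod_congr rfl h3,
          Finset.prod_const, Finset.prod_const, Finset.prod_const]
    _ = _ := by
        have hiS : VB ∩ S = S.erase w := by
          ext v
          simp only [mem_inter, mem_erase]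
          constructor
          · rintro ⟨hvB, hvS⟩; exact ⟨fun h => hwB (h ▸ hvB), hvS⟩
          · rintro ⟨hvw, hvS⟩; exact ⟨hSVB (mem_erase.mpr ⟨hvw, hvS⟩), hvS⟩
        have hce : (S.erase w).card = S.card - 1 := Finset.card_erase_of_mem hwS
        have hsd : (VB \ S).card = VB.card - (S.card - 1) := by
          have h0 := Finset.card_sdiff_add_card_inter VB S
          rw [hiS, hce] at h0
          omega
        have hsd2 : ((univ : Finset (Fin n)) \ VB).card = n - VB.card := by
          rw [Finset.card_sdiff_of_subset (subset_univ _), card_univ, Fintype.card_fin]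
        rw [hce, hsd, hsd2]
  
end PartC

section PartD

lemma perunit {x e2 : ℝ} (hx0 : 0 ≤ x) (hxe : x ≤ e2) (he2 : e2 < 1) :
    x * Real.exp (1 - x) ≤ e2 * Real.exp (1 - e2) := by
  have h1 : x ≤ e2 * Real.exp (x - e2) := by
    have h2 : x ≤ e2 * (1 + (x - e2)) := by nlinarith
    have h3 : (x - e2) + 1 ≤ Real.exp (x - e2) := Real.add_one_le_exp _
    nlinarith [Real.exp_pos (x - e2), (le_trans hxe he2.le : x ≤ 1)]
  calc x * Real.exp (1 - x) ≤ (e2 * Real.exp (x - e2)) * Real.exp (1 - x) := by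
        have := Real.exp_pos (1 - x)
        nlinarith
    _ = e2 * Real.exp (1 - e2) := by
        rw [mul_assoc, ← Real.exp_add]
        ring_nf

lemma entropy_bound (b k : ℕ) (hkb : k ≤ b) {K B : ℝ} (hK : K = k) (hB : B = b)
    (hK0 : 0 ≤ K) (hKB : K ≤ B) :
    (b.choose k : ℝ) * K ^ k * (B - K) ^ (b - k) ≤ B ^ b := by
  have hBK : 0 ≤ B - K := sub_nonneg.mpr hKB
  have hexp : (K + (B - K)) ^ b
      = ∑ m ∈ Finset.range (b + 1), K ^ m * (B - K) ^ (b - m) * (b.choose m : ℝ) :=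
    add_pow K (B - K) b
  have hmem : k ∈ Finset.range (b + 1) := Finset.mem_range.mpr (by omega)
  have hterm := Finset.single_le_sum (f := fun m => K ^ m * (B - K) ^ (b - m) * (b.choose m : ℝ))
    (fun i _ => by positivity) hmem
  rw [← hexp] at hterm
  calc (b.choose k : ℝ) * K ^ k * (B - K) ^ (b - k)
      = K ^ k * (B - K) ^ (b - k) * (b.choose k : ℝ) := by ring
    _ ≤ (K + (B - K)) ^ b := hterm
    _ = B ^ b := by ring_nf

lemma term_bound (e2 : ℝ) (he2a : 0 < e2) (he2b : e2 < 1) (k b s n1 : ℕ)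
    (hk1 : 1 ≤ k) (hkb : k ≤ b) (hs : s = k + 1)
    (hsν : (s : ℝ) ≤ (n1 : ℝ)) (hx : (s : ℝ) * b ≤ e2 * k * n1) :
    (b.choose k : ℝ) * (s : ℝ) ^ k * ((n1 : ℝ) - s) ^ (b - k)
      ≤ Real.exp (-(e2 - 1 - Real.log e2) * k) * (n1 : ℝ) ^ b := by
  set K : ℝ := (k : ℝ) with hKdef
  set B : ℝ := (b : ℝ) with hBdef
  set ν : ℝ := (n1 : ℝ) with hνdef
  set σ : ℝ := (s : ℝ) with hσdef
  have hK1 : (1 : ℝ) ≤ K := by rw [hKdef]; exact_mod_cast hk1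
  have hKB : K ≤ B := by rw [hKdef, hBdef]; exact_mod_cast hkb
  have hσK : σ = K + 1 := by rw [hσdef, hKdef, hs]; push_cast; ring
  have hν0 : 0 < ν := lt_of_lt_of_le (by rw [hσK]; linarith) hsν
  have hσ0 : 0 < σ := by rw [hσK]; linarith
  have hKpos : (0 : ℝ) < K := by linarith
  set m : ℝ := σ * B / ν with hmdef
  have hm0 : 0 ≤ m := by
    apply div_nonneg _ hν0.le
    exact mul_nonneg hσ0.le (by linarith)
  have hxK : m ≤ e2 * K := by
    rw [hmdef, div_le_iff₀ hν0]
    exact hx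
  have hmK : m ≤ K := le_trans hxK (by nlinarith)
  have hνσ : 0 ≤ ν - σ := by linarith
  -- step 1: entropy
  have h1 := entropy_bound b k hkb rfl rfl (by linarith) hKB
  -- step 2
  have h2 : (ν - σ) ^ (b - k) * B ^ (b - k) ≤ ((B - K) * ν) ^ (b - k) * Real.exp (K - m) := by
    rcases Nat.eq_or_lt_of_le hkb with heq | hlt
    · subst heq
      simp only [Nat.sub_self, pow_zero, one_mul]
      have hmB : m ≤ B := by
        rw [hmdef, div_le_iff₀ hν0]
        nlinarith
      calc (1 : ℝ) = Real.exp 0 := (Real.exp_zero).symm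
        _ ≤ Real.exp (K - m) := Real.exp_le_exp.mpr (by linarith)
    · have hBK : 0 < B - K := by
        have h : (k : ℝ) < (b : ℝ) := by exact_mod_cast hlt
        rw [hBdef, hKdef]; linarith
      have hkpos : 0 < (B - K) * ν := mul_pos hBK hν0
      set u : ℝ := ((ν - σ) * B - (B - K) * ν) / ((B - K) * ν) with hudef
      have hval : (ν - σ) * B = ((B - K) * ν) * (1 + u) := by
        rw [hudef]; field_simp; ring
      have h1u : 0 ≤ 1 + u := by
        have hval2 : 1 + u = (ν - σ) * B / ((B - K) * ν) := by
          rw [hudef]; field_simp; ring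
        rw [hval2]
        exact div_nonneg (mul_nonneg hνσ (by linarith)) hkpos.le
      have hue : 1 + u ≤ Real.exp u := by linarith [Real.add_one_le_exp u]
      have hju : ((b - k : ℕ) : ℝ) * u = K - m := by
        have hbk : ((b - k : ℕ) : ℝ) = B - K := by
          rw [hBdef, hKdef]; push_cast [Nat.cast_sub hkb]; ring
        rw [hbk, hudef, hmdef]
        field_simp
        ring
      calc (ν - σ) ^ (b - k) * B ^ (b - k)
          = ((ν - σ) * B) ^ (b - k) := by rw [mul_pow]
        _ = (((B - K) * ν) * (1 + u)) ^ (b - k) := by rw [hval]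
        _ = ((B - K) * ν) ^ (b - k) * (1 + u) ^ (b - k) := by rw [mul_pow]
        _ ≤ ((B - K) * ν) ^ (b - k) * (Real.exp u) ^ (b - k) := by
            apply mul_le_mul_of_nonneg_left _ (by positivity)
            exact pow_le_pow_left₀ h1u hue _
        _ = ((B - K) * ν) ^ (b - k) * Real.exp (K - m) := by
            rw [← Real.exp_nat_mul, hju]
  -- step 3
  have h3 : m ^ k * Real.exp (K - m) ≤ K ^ k * Real.exp (-(e2 - 1 - Real.log e2) * K) := by
    set x : ℝ := m / K with hxdef
    have hx0 : 0 ≤ x := div_nonneg hm0 hKpos.le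
    have hxe : x ≤ e2 := by rw [hxdef, div_le_iff₀ hKpos]; linarith [hxK]
    have hKx : K * x = m := by rw [hxdef]; field_simp
    have hper := perunit hx0 hxe he2b
    have hpow := pow_le_pow_left₀ (by positivity) hper k
    have hL : K ^ k * (x * Real.exp (1 - x)) ^ k = m ^ k * Real.exp (K - m) := by
      rw [mul_pow, ← mul_assoc, ← mul_pow, hKx, ← Real.exp_nat_mul]
      congr 2
      rw [← hKx, hKdef]
      ring
    have hbase : Real.exp (-(e2 - 1 - Real.log e2)) = e2 * Real.exp (1 - e2) := by
      rw [show -(e2 - 1 - Real.log e2) = Real.log e2 + (1 - e2) by ring, Real.exp_add,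
        Real.exp_log he2a]
    have hR : K ^ k * (e2 * Real.exp (1 - e2)) ^ k = K ^ k * Real.exp (-(e2 - 1 - Real.log e2) * K) := by
      congr 1
      rw [← hbase, ← Real.exp_nat_mul]
      congr 1
      rw [hKdef]
      ring
    rw [← hL, ← hR]
    exact mul_le_mul_of_nonneg_left hpow (by positivity)
  -- combine
  have hP : (0:ℝ) < K ^ k * (B - K) ^ (b - k) := by
    apply mul_pos (by positivity)
    rcases Nat.eq_or_lt_of_le hkb with heq | hlt
    · subst heq; simp
    · have hBK : 0 < B - K := by
        have h : (k : ℝ) < (b : ℝ) := by exact_mod_cast hlt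
        rw [hBdef, hKdef]; linarith
      positivity
  apply le_of_mul_le_mul_right _ hP
  have hσB : σ * B = m * ν := by rw [hmdef]; field_simp
  have hνb : ν ^ k * ν ^ (b - k) = ν ^ b := by
    rw [← pow_add]
    congr 1
    omega
  have hBb : B ^ k * B ^ (b - k) = B ^ b := by
    rw [← pow_add]
    congr 1
    omega
  calc (b.choose k : ℝ) * σ ^ k * (ν - σ) ^ (b - k) * (K ^ k * (B - K) ^ (b - k))
      = ((b.choose k : ℝ) * K ^ k * (B - K) ^ (b - k)) * (σ ^ k * (ν - σ) ^ (b - k)) := by ring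
    _ ≤ B ^ b * (σ ^ k * (ν - σ) ^ (b - k)) := by
        apply mul_le_mul_of_nonneg_right h1 (by positivity)
    _ = (σ * B) ^ k * ((ν - σ) ^ (b - k) * B ^ (b - k)) := by
        rw [← hBb, mul_pow]; ring
    _ ≤ (σ * B) ^ k * (((B - K) * ν) ^ (b - k) * Real.exp (K - m)) := by
        apply mul_le_mul_of_nonneg_left h2 (by positivity)
    _ = (m ^ k * Real.exp (K - m)) * (ν ^ k * ν ^ (b - k) * (B - K) ^ (b - k)) := by
        rw [hσB, mul_pow, mul_pow]; ring
    _ ≤ (K ^ k * Real.exp (-(e2 - 1 - Real.log e2) * K)) * (ν ^ k * ν ^ (b - k) * (B - K) ^ (b - k)) := by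
        apply mul_le_mul_of_nonneg_right h3
        apply mul_nonneg (by positivity)
        rcases Nat.eq_or_lt_of_le hkb with heq | hlt
        · subst heq; simp
        · have hBK : 0 < B - K := by
            have h : (k : ℝ) < (b : ℝ) := by exact_mod_cast hlt
            rw [hBdef, hKdef]; linarith
          positivity
    _ = Real.exp (-(e2 - 1 - Real.log e2) * K) * ν ^ b * (K ^ k * (B - K) ^ (b - k)) := by
        rw [hνb]; ring
  
end PartD

section PartE
variable {n : ℕ}

lemma master_count {d : Fin n} (hn : 2 ≤ n) (VB : Finset (Fin n)) (w : Fin n)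
    (hw : w ≠ d) (hd : d ∉ VB) (hwB : w ∉ VB) (t : ℕ) (ht : 1 ≤ t) :
    ((univ.filter (fun ω : Fin n → NodeOrder n d =>
        t ≤ (treeSet VB (succG VB ω) w).card)).card : ℕ)
      ≤ ∑ s ∈ Finset.Icc t (VB.card + 1),
          (VB.card.choose (s-1)) *
            ((s * (Fb hn ⟨w, hw⟩).card) ^ (s - 1)
              * ((n - 1 - s) * (Fb hn ⟨w, hw⟩).card) ^ (VB.card - (s - 1))
              * ((n - 1) * (Fb hn ⟨w, hw⟩).card) ^ (n - VB.card)) := by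
  classical
  set Scal : Finset (Finset (Fin n)) :=
    (univ : Finset (Fin n)).powerset.filter
      (fun S => w ∈ S ∧ S.erase w ⊆ VB ∧ t ≤ S.card) with hScal
  have hsub : univ.filter (fun ω : Fin n → NodeOrder n d =>
      t ≤ (treeSet VB (succG VB ω) w).card) ⊆ Scal.biUnion (AS d VB w) := by
    intro ω hω
    rw [mem_filter] at hω
    rw [mem_biUnion]
    refine ⟨treeSet VB (succG VB ω) w, ?_, mem_AS_treeSet VB w ω⟩
    rw [hScal, mem_filter, mem_powerset]
    exact ⟨subset_univ _, w_mem_treeSet VB _ w, treeSet_sdiff_subset VB _ w, hω.2⟩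
  have h1 : (univ.filter (fun ω : Fin n → NodeOrder n d =>
      t ≤ (treeSet VB (succG VB ω) w).card)).card ≤ ∑ S ∈ Scal, (AS d VB w S).card :=
    le_trans (Finset.card_le_card hsub) Finset.card_biUnion_le
  have hmaps : ∀ S ∈ Scal, S.card ∈ Finset.Icc t (VB.card + 1) := by
    intro S hS
    rw [hScal, mem_filter] at hS
    obtain ⟨_, hwS, hSVB, htS⟩ := hS
    rw [Finset.mem_Icc]
    refine ⟨htS, ?_⟩
    have hins : S ⊆ insert w VB := by
      intro v hv
      rcases eq_or_ne v w with rfl | hne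
      · exact mem_insert_self _ _
      · exact mem_insert_of_mem (hSVB (mem_erase.mpr ⟨hne, hv⟩))
    calc S.card ≤ (insert w VB).card := Finset.card_le_card hins
      _ ≤ VB.card + 1 := Finset.card_insert_le _ _
  have h2 : ∑ S ∈ Scal, (AS d VB w S).card
      = ∑ s ∈ Finset.Icc t (VB.card + 1),
          ∑ S ∈ Scal.filter (fun S => S.card = s), (AS d VB w S).card :=
    (Finset.sum_fiberwise_of_maps_to hmaps _).symm
  have h3 : ∀ s ∈ Finset.Icc t (VB.card + 1),
      ∑ S ∈ Scal.filter (fun S => S.card = s), (AS d VB w S).card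
        ≤ (VB.card.choose (s-1)) *
            ((s * (Fb hn ⟨w, hw⟩).card) ^ (s - 1)
              * ((n - 1 - s) * (Fb hn ⟨w, hw⟩).card) ^ (VB.card - (s - 1))
              * ((n - 1) * (Fb hn ⟨w, hw⟩).card) ^ (n - VB.card)) := by
    intro s hs
    have hcardAS : ∀ S ∈ Scal.filter (fun S => S.card = s),
        (AS d VB w S).card
          = (s * (Fb hn ⟨w, hw⟩).card) ^ (s - 1)
              * ((n - 1 - s) * (Fb hn ⟨w, hw⟩).card) ^ (VB.card - (s - 1))
              * ((n - 1) * (Fb hn ⟨w, hw⟩).card) ^ (n - VB.card) := by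
      intro S hS
      rw [mem_filter, hScal, mem_filter] at hS
      obtain ⟨⟨_, hwS, hSVB, _⟩, hcard⟩ := hS
      rw [AS_card hn VB w hw hd hwB hwS hSVB, hcard]
    rw [Finset.sum_congr rfl hcardAS, Finset.sum_const, smul_eq_mul]
    apply Nat.mul_le_mul_right
    -- fiber count ≤ choose
    have hinj : ∀ S ∈ Scal.filter (fun S => S.card = s),
        S.erase w ∈ VB.powersetCard (s - 1) := by
      intro S hS
      rw [mem_filter, hScal, mem_filter] at hS
      obtain ⟨⟨_, hwS, hSVB, _⟩, hcard⟩ := hS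
      rw [Finset.mem_powersetCard]
      exact ⟨hSVB, by rw [Finset.card_erase_of_mem hwS, hcard]⟩
    have hinjOn : Set.InjOn (fun S : Finset (Fin n) => S.erase w)
        ↑(Scal.filter (fun S => S.card = s)) := by
      intro S1 hS1 S2 hS2 heq
      simp only [Finset.coe_filter, Set.mem_setOf_eq] at hS1 hS2
      rw [hScal, mem_filter] at hS1 hS2
      have hw1 : w ∈ S1 := hS1.1.2.1
      have hw2 : w ∈ S2 := hS2.1.2.1
      simp only at heq
      rw [← Finset.insert_erase hw1, ← Finset.insert_erase hw2, heq]
    calc (Scal.filter (fun S => S.card = s)).card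
        ≤ (VB.powersetCard (s - 1)).card :=
          Finset.card_le_card_of_injOn _ hinj hinjOn
      _ = VB.card.choose (s - 1) := Finset.card_powersetCard _ _
  calc _ ≤ ∑ S ∈ Scal, (AS d VB w S).card := h1
    _ = _ := h2
    _ ≤ _ := Finset.sum_le_sum h3

end PartE

section PartE2

lemma icc_term_bound (eps1 e2 : ℝ) (he2a : 0 < e2) (he2b : e2 < 1)
    (n b s t c : ℕ) (hts : t ≤ s) (hsb : s ≤ b + 1) (hbnN : b + 2 ≤ n) (ht1 : 1 ≤ t)
    (hs2 : 2 ≤ s)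
    (hbe : (b:ℝ) ≤ eps1 * ((n:ℝ) - 1)) (heps1 : 0 ≤ eps1)
    (hkey : (s:ℝ) * eps1 ≤ e2 * ((s:ℝ) - 1)) :
    ((b.choose (s-1) * ((s * c) ^ (s - 1) * ((n - 1 - s) * c) ^ (b - (s - 1))
        * ((n - 1) * c) ^ (n - b)) : ℕ) : ℝ)
      ≤ Real.exp (-(e2 - 1 - Real.log e2) * ((t:ℝ) - 1))
          * (((n:ℝ) - 1) ^ n * (c:ℝ) ^ n) := by
  set c2 : ℝ := e2 - 1 - Real.log e2 with hc2def
  have hc2pos : 0 < c2 := by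
    have hlog := Real.log_lt_sub_one_of_pos he2a (ne_of_lt he2b)
    rw [hc2def]; linarith
  have hk1 : 1 ≤ s - 1 := by omega
  have hkb : s - 1 ≤ b := by omega
  have hsn1 : s ≤ n - 1 := by omega
  have h1n : 1 ≤ n := by omega
  have hν1 : (1:ℝ) ≤ (n:ℝ) - 1 := by
    have : (2:ℝ) ≤ (n:ℝ) := by exact_mod_cast (by omega : 2 ≤ n)
    linarith
  have hcast1 : ((n - 1 - s : ℕ) : ℝ) = ((n-1 : ℕ) : ℝ) - (s:ℝ) := by
    push_cast [Nat.cast_sub hsn1]; ring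
  have hcastn1 : ((n - 1 : ℕ) : ℝ) = (n:ℝ) - 1 := by
    push_cast [Nat.cast_sub h1n]; ring
  have hsν : ((s:ℕ) : ℝ) ≤ ((n - 1 : ℕ) : ℝ) := by exact_mod_cast hsn1
  have hx : ((s:ℕ) : ℝ) * b ≤ e2 * ((s - 1 : ℕ):ℝ) * ((n-1 : ℕ) : ℝ) := by
    have hks : ((s - 1 : ℕ) : ℝ) = (s:ℝ) - 1 := by
      push_cast [Nat.cast_sub (by omega : 1 ≤ s)]; ring
    rw [hks, hcastn1]
    have hbnn : (0:ℝ) ≤ (n:ℝ) - 1 := by linarith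
    have hsp : (0:ℝ) ≤ (s:ℝ) := by positivity
    calc (s:ℝ) * b ≤ (s:ℝ) * (eps1 * ((n:ℝ) - 1)) := by
          apply mul_le_mul_of_nonneg_left hbe hsp
      _ = ((s:ℝ) * eps1) * ((n:ℝ) - 1) := by ring
      _ ≤ (e2 * ((s:ℝ) - 1)) * ((n:ℝ) - 1) := by
          apply mul_le_mul_of_nonneg_right hkey hbnn
      _ = e2 * ((s:ℝ) - 1) * ((n:ℝ) - 1) := by ring
  have htb := term_bound e2 he2a he2b (s-1) b s (n-1) hk1 hkb (by omega) hsν hx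
  rw [← hc2def] at htb
  have hexpmono : Real.exp (-c2 * ((s-1:ℕ):ℝ)) ≤ Real.exp (-c2 * ((t:ℝ) - 1)) := by
    apply Real.exp_le_exp.mpr
    have h1 : (t:ℝ) - 1 ≤ ((s-1:ℕ):ℝ) := by
      have h2 : ((t - 1 : ℕ):ℝ) ≤ ((s-1:ℕ):ℝ) := by
        exact_mod_cast (by omega : t - 1 ≤ s - 1)
      have ht1' : ((t - 1 : ℕ):ℝ) = (t:ℝ) - 1 := by
        push_cast [Nat.cast_sub ht1]; ring
      linarith
    nlinarith [hc2pos]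
  have hcpow : (c:ℝ) ^ (s-1) * (c:ℝ) ^ (b - (s-1)) * (c:ℝ) ^ (n - b) = (c:ℝ) ^ n := by
    rw [← pow_add, ← pow_add]
    congr 1
    omega
  have hνpow : ((n:ℝ) - 1) ^ b * ((n:ℝ) - 1) ^ (n - b) = ((n:ℝ) - 1) ^ n := by
    rw [← pow_add]
    congr 1
    omega
  have hν0 : (0:ℝ) ≤ (n:ℝ) - 1 := by linarith
  have hstep : ((b.choose (s-1) * ((s * c) ^ (s - 1) * ((n - 1 - s) * c) ^ (b - (s - 1))
        * ((n - 1) * c) ^ (n - b)) : ℕ) : ℝ)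
      = ((b.choose (s-1) : ℝ) * (s:ℝ) ^ (s-1) * (((n-1:ℕ):ℝ) - (s:ℝ)) ^ (b - (s-1)))
        * (((n:ℝ) - 1) ^ (n - b) * ((c:ℝ) ^ (s-1) * (c:ℝ) ^ (b - (s-1)) * (c:ℝ) ^ (n - b))) := by
    push_cast
    rw [mul_pow, mul_pow, mul_pow, hcast1, hcastn1]
    ring
  rw [hstep, hcpow]
  calc ((b.choose (s-1) : ℝ) * (s:ℝ) ^ (s-1) * (((n-1:ℕ):ℝ) - (s:ℝ)) ^ (b - (s-1)))
        * (((n:ℝ) - 1) ^ (n - b) * (c:ℝ) ^ n)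
      ≤ (Real.exp (-c2 * ((s-1:ℕ):ℝ)) * ((n-1:ℕ):ℝ) ^ b)
        * (((n:ℝ) - 1) ^ (n - b) * (c:ℝ) ^ n) := by
        apply mul_le_mul_of_nonneg_right htb
        apply mul_nonneg (by positivity) (by positivity)
    _ ≤ (Real.exp (-c2 * ((t:ℝ)-1)) * ((n-1:ℕ):ℝ) ^ b)
        * (((n:ℝ) - 1) ^ (n - b) * (c:ℝ) ^ n) := by
        apply mul_le_mul_of_nonneg_right _ (mul_nonneg (by positivity) (by positivity))
        apply mul_le_mul_of_nonneg_right hexpmono (by positivity)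
    _ = Real.exp (-c2 * ((t:ℝ)-1)) * (((n:ℝ) - 1) ^ n * (c:ℝ) ^ n) := by
        rw [hcastn1, ← hνpow]
        ring

end PartE2

set_option maxHeartbeats 4000000 in
theorem tree_size_bound (ε : ℝ) (hε0 : 0 < ε) (hε1 : ε < 1) :
    ∃ (D p : ℝ) (N : ℕ), 0 < D ∧ 0 < p ∧
      ∀ n : ℕ, N ≤ n →
        ∀ (d : Fin n) (VB : Finset (Fin n)), d ∉ VB → (VB.card : ℝ) ≤ ε * n →
        ∀ w : Fin n, w ≠ d → w ∉ VB →
          1 - (lg n) ^ p / (n : ℝ) ^ 3 ≤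
            unifProb (fun ω : Fin n → NodeOrder n d =>
              ((∑ i ∈ Finset.range (n + 2),
                  (layer VB (succG VB ω) w i).card : ℕ) : ℝ)
                ≤ D * lg n * lg (lg n)) := by
  classical
  have h1ε : 0 < 1 - ε := by linarith
  set ε' : ℝ := (1 + ε) / 2 with hε'def
  set ε'' : ℝ := (3 + ε) / 4 with hε''def
  have he2a : 0 < ε'' := by rw [hε''def]; linarith
  have he2b : ε'' < 1 := by rw [hε''def]; linarith
  set c2 : ℝ := ε'' - 1 - Real.log ε'' with hc2def
  have hc2pos : 0 < c2 := by
    have hlog := Real.log_lt_sub_one_of_pos he2a (ne_of_lt he2b)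
    rw [hc2def]; linarith
  set k0 : ℕ := ⌈(4:ℝ)/(1-ε)⌉₊ + 2 with hk0def
  set D : ℝ := (k0 : ℝ) + 2 + 5 / c2 with hDdef
  set N : ℕ := ⌈(4:ℝ)/(1-ε)⌉₊ + 6 with hNdef
  have hk0pos : (0:ℝ) < k0 := by
    rw [hk0def]; push_cast; positivity
  refine ⟨D, 1, N, by rw [hDdef]; positivity, one_pos, ?_⟩
  intro n hNn d VB hd hVBcard w hw hwB
  have hk04 : (4:ℝ)/(1-ε) ≤ (k0 : ℝ) := by
    rw [hk0def]; push_cast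
    linarith [Nat.le_ceil ((4:ℝ)/(1-ε))]
  have hn4 : 4 ≤ n := by omega
  have hn2 : 2 ≤ n := by omega
  have hnR4 : (4:ℝ) ≤ (n:ℝ) := by exact_mod_cast hn4
  have hν1 : (1:ℝ) ≤ (n:ℝ) - 1 := by linarith
  have hnN : (4:ℝ)/(1-ε) ≤ (n:ℝ) - 1 := by
    have h1 : ((⌈(4:ℝ)/(1-ε)⌉₊ : ℕ) : ℝ) + 5 ≤ (n:ℝ) := by
      exact_mod_cast (by omega : ⌈(4:ℝ)/(1-ε)⌉₊ + 5 ≤ n)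
    linarith [Nat.le_ceil ((4:ℝ)/(1-ε))]
  have hn1ε : 4 ≤ ((n:ℝ) - 1) * (1 - ε) := by
    rw [div_le_iff₀ h1ε] at hnN
    linarith
  set b : ℕ := VB.card with hbdef
  have hbε' : (b:ℝ) ≤ ε' * ((n:ℝ) - 1) := by
    have h1 : ε * n ≤ ε' * ((n:ℝ) - 1) := by
      rw [hε'def]
      nlinarith
    linarith [hVBcard]
  have hbn : (b:ℝ) + 2 ≤ (n:ℝ) := by
    have h2 : ε' * ((n:ℝ) - 1) ≤ (n:ℝ) - 2 := by
      rw [hε'def]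
      nlinarith
    linarith
  have hbnN : b + 2 ≤ n := by exact_mod_cast hbn
  set t : ℕ := k0 + 2 + ⌈(5/c2) * Real.log n⌉₊ with htdef
  have ht1 : 1 ≤ t := by omega
  -- log facts
  have hlogn1 : (1:ℝ) ≤ Real.log n := by
    have h : Real.exp 1 ≤ (n:ℝ) := by
      have := Real.exp_one_lt_d9
      linarith
    calc (1:ℝ) = Real.log (Real.exp 1) := (Real.log_exp 1).symm
      _ ≤ Real.log n := Real.log_le_log (Real.exp_pos 1) h
  have hlgn2 : (2:ℝ) ≤ lg n := by
    rw [lg, Real.le_logb_iff_rpow_le one_lt_two (by linarith : (0:ℝ) < n)]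
    have h4 : (2:ℝ) ^ (2:ℝ) = 4 := by
      rw [show (2:ℝ) = ((2:ℕ):ℝ) from rfl]
      rw [Real.rpow_natCast]
      norm_num
    rw [h4]
    exact hnR4
  have hlgn0 : (0:ℝ) < lg n := by linarith
  have hloglg : (1:ℝ) ≤ lg (lg n) := by
    rw [lg, Real.le_logb_iff_rpow_le one_lt_two hlgn0]
    rw [Real.rpow_one]
    exact hlgn2
  have hlnlg : Real.log n ≤ lg n := by
    rw [lg, Real.logb, le_div_iff₀ (Real.log_pos one_lt_two)]
    nlinarith [Real.log_two_lt_d9, Real.log_nonneg (by linarith : (1:ℝ) ≤ (n:ℝ))]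
  -- bound on t
  have htub : (t:ℝ) - 1 ≤ D * lg n * lg (lg n) := by
    have hceil : (⌈(5/c2) * Real.log n⌉₊ : ℝ) ≤ (5/c2) * Real.log n + 1 := by
      have := Nat.ceil_lt_add_one (by positivity : (0:ℝ) ≤ (5/c2) * Real.log n)
      linarith
    have h1 : (t:ℝ) ≤ (k0:ℝ) + 3 + (5/c2) * Real.log n := by
      rw [htdef]; push_cast; linarith
    have hDpos : (0:ℝ) ≤ D := by rw [hDdef]; positivity
    have hk2' : (k0:ℝ) + 2 ≤ ((k0:ℝ) + 2) * Real.log n :=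
      le_mul_of_one_le_right (by positivity) hlogn1
    have hDlog : D * Real.log n = ((k0:ℝ) + 2) * Real.log n + (5/c2) * Real.log n := by
      rw [hDdef]; ring
    have h3 : D * Real.log n ≤ D * lg n :=
      mul_le_mul_of_nonneg_left hlnlg hDpos
    have h4 : D * lg n ≤ D * lg n * lg (lg n) :=
      le_mul_of_one_le_right (by positivity) hloglg
    calc (t:ℝ) - 1 ≤ ((k0:ℝ) + 2) + 5/c2 * Real.log n := by linarith
      _ ≤ ((k0:ℝ) + 2) * Real.log n + 5/c2 * Real.log n := by linarith
      _ = D * Real.log n := hDlog.symm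
      _ ≤ D * lg n := h3
      _ ≤ D * lg n * lg (lg n) := h4
  have htlb : (5/c2) * Real.log n ≤ (t:ℝ) - 1 := by
    have hcl := Nat.le_ceil ((5/c2) * Real.log n)
    have ht' : ((k0:ℕ):ℝ) + 2 + (⌈(5/c2) * Real.log n⌉₊ : ℝ) = (t:ℝ) := by
      rw [htdef]; push_cast; ring
    linarith
  -- the counting
  set c : ℕ := (Fb hn2 ⟨w, hw⟩).card with hcdef
  have hcardΩ : Fintype.card (Fin n → NodeOrder n d) = ((n-1) * c) ^ n := by
    rw [Fintype.card_fun, count_total hn2 ⟨w, hw⟩, Fintype.card_fin]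
  have hΩpos : 0 < Fintype.card (Fin n → NodeOrder n d) := by
    have : Nonempty (NodeOrder n d) :=
      ⟨Fintype.equivOfCardEq (by rw [Fintype.card_fin, card_target hn2])⟩
    exact Fintype.card_pos
  have hΩR : ((Fintype.card (Fin n → NodeOrder n d) : ℕ) : ℝ)
      = ((n:ℝ) - 1) ^ n * (c:ℝ) ^ n := by
    rw [hcardΩ]
    have hcastn1 : ((n - 1 : ℕ) : ℝ) = (n:ℝ) - 1 := by
      push_cast [Nat.cast_sub (by omega : 1 ≤ n)]; ring
    push_cast [hcastn1]
    rw [mul_pow]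
  have hB0 : (0:ℝ) ≤ ((n:ℝ) - 1) ^ n * (c:ℝ) ^ n :=
    mul_nonneg (pow_nonneg (by linarith) n) (pow_nonneg (by positivity) n)
  -- per-term bound
  have hterm : ∀ s ∈ Finset.Icc t (b + 1),
      ((b.choose (s-1) * ((s * c) ^ (s - 1) * ((n - 1 - s) * c) ^ (b - (s - 1))
          * ((n - 1) * c) ^ (n - b)) : ℕ) : ℝ)
        ≤ Real.exp (-c2 * ((t:ℝ) - 1)) * (((n:ℝ) - 1) ^ n * (c:ℝ) ^ n) := by
    intro s hs
    rw [Finset.mem_Icc] at hs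
    obtain ⟨hts, hsb⟩ := hs
    have hsk0 : k0 + 2 ≤ s := le_trans (by omega) hts
    have hkey : (s:ℝ) * ε' ≤ ε'' * ((s:ℝ) - 1) := by
      have hsR : ((4:ℝ)/(1-ε)) + 2 ≤ (s:ℝ) := by
        have h : ((k0 : ℕ) : ℝ) + 2 ≤ (s:ℝ) := by exact_mod_cast hsk0
        linarith
      have h44 : ((4:ℝ)/(1-ε)) * (1-ε) = 4 := by field_simp
      rw [hε'def, hε''def]
      rw [div_le_iff₀ h1ε] at hk04
      nlinarith [hsR, h1ε]
    rw [hc2def]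
    exact icc_term_bound ε' ε'' he2a he2b n b s t c hts hsb hbnN ht1 (by omega)
      hbε' (by rw [hε'def]; linarith) hkey
  -- sum bound
  have hIccR : ((Finset.Icc t (b+1)).card : ℝ) ≤ (n:ℝ) := by
    rw [Nat.card_Icc]
    exact_mod_cast (by omega : b + 1 + 1 - t ≤ n)
  set G : Finset (Fin n → NodeOrder n d) :=
    univ.filter (fun ω => t ≤ (treeSet VB (succG VB ω) w).card) with hGdef
  have hGcard : (G.card : ℝ)
      ≤ (n:ℝ) * (Real.exp (-c2 * ((t:ℝ)-1)) * (((n:ℝ) - 1) ^ n * (c:ℝ) ^ n)) := by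
    have hmc := master_count hn2 VB w hw hd hwB t ht1
    have h1 : (G.card : ℝ) ≤ ∑ s ∈ Finset.Icc t (b + 1),
        ((b.choose (s-1) * ((s * c) ^ (s - 1) * ((n - 1 - s) * c) ^ (b - (s - 1))
          * ((n - 1) * c) ^ (n - b)) : ℕ) : ℝ) := by
      rw [hGdef]
      exact_mod_cast hmc
    have h2 : ∑ s ∈ Finset.Icc t (b + 1),
        ((b.choose (s-1) * ((s * c) ^ (s - 1) * ((n - 1 - s) * c) ^ (b - (s - 1))
          * ((n - 1) * c) ^ (n - b)) : ℕ) : ℝ)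
        ≤ ∑ _s ∈ Finset.Icc t (b + 1),
            Real.exp (-c2 * ((t:ℝ)-1)) * (((n:ℝ) - 1) ^ n * (c:ℝ) ^ n) :=
      Finset.sum_le_sum hterm
    rw [Finset.sum_const, nsmul_eq_mul] at h2
    have hEpos : (0:ℝ) ≤ Real.exp (-c2 * ((t:ℝ)-1)) * (((n:ℝ) - 1) ^ n * (c:ℝ) ^ n) :=
      mul_nonneg (Real.exp_pos _).le hB0
    calc (G.card : ℝ) ≤ _ := h1
      _ ≤ _ := h2
      _ ≤ (n:ℝ) * (Real.exp (-c2 * ((t:ℝ)-1)) * (((n:ℝ) - 1) ^ n * (c:ℝ) ^ n)) :=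
        mul_le_mul_of_nonneg_right hIccR hEpos
  -- exp smallness
  have hexpsmall : (n:ℝ) * Real.exp (-c2 * ((t:ℝ)-1)) ≤ lg n / (n:ℝ) ^ 3 := by
    have hn0 : (0:ℝ) < n := by linarith
    have h5 : 5 * Real.log n ≤ c2 * ((t:ℝ)-1) := by
      have heq : c2 * ((5/c2) * Real.log n) = 5 * Real.log n := by
        field_simp
      calc 5 * Real.log n = c2 * ((5/c2) * Real.log n) := heq.symm
        _ ≤ c2 * ((t:ℝ)-1) := by
          apply mul_le_mul_of_nonneg_left htlb hc2pos.le
    have hpow4 : ((n:ℝ)) ^ (4:ℕ) = Real.exp (((4:ℕ):ℝ) * Real.log n) := by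
      rw [Real.exp_nat_mul, Real.exp_log hn0]
    have hexp4 : ((n:ℝ)) ^ (4:ℕ) * Real.exp (-c2 * ((t:ℝ)-1)) ≤ 1 := by
      rw [hpow4, ← Real.exp_add]
      have harg : ((4:ℕ):ℝ) * Real.log n + (-c2 * ((t:ℝ)-1)) ≤ 0 := by
        push_cast
        nlinarith [hlogn1]
      calc Real.exp _ ≤ Real.exp 0 := Real.exp_le_exp.mpr harg
        _ = 1 := Real.exp_zero
    rw [le_div_iff₀ (by positivity : (0:ℝ) < (n:ℝ) ^ 3)]
    have hfin : (n:ℝ) * Real.exp (-c2 * ((t:ℝ)-1)) * (n:ℝ) ^ 3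
        = (n:ℝ) ^ (4:ℕ) * Real.exp (-c2 * ((t:ℝ)-1)) := by ring
    rw [hfin]
    calc ((n:ℝ)) ^ (4:ℕ) * Real.exp (-c2 * ((t:ℝ)-1)) ≤ 1 := hexp4
      _ ≤ lg n := by linarith
  -- event inclusion
  set P : (Fin n → NodeOrder n d) → Prop := fun ω =>
      ((∑ i ∈ Finset.range (n + 2), (layer VB (succG VB ω) w i).card : ℕ) : ℝ)
        ≤ D * lg n * lg (lg n) with hPdef
  have hsubP : univ.filter (fun ω => ¬ P ω) ⊆ G := by
    intro ω hω
    rw [mem_filter] at hω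
    rw [hGdef, mem_filter]
    refine ⟨mem_univ _, ?_⟩
    by_contra hcon
    apply hω.2
    simp only [hPdef]
    have hcard : (treeSet VB (succG VB ω) w).card ≤ t - 1 := by omega
    rw [sum_layers_eq_card]
    have hc1 : ((treeSet VB (succG VB ω) w).card : ℝ) ≤ ((t - 1 : ℕ) : ℝ) := by
      exact_mod_cast hcard
    have hc2' : ((t - 1 : ℕ) : ℝ) = (t:ℝ) - 1 := by
      push_cast [Nat.cast_sub ht1]; ring
    calc ((treeSet VB (succG VB ω) w).card : ℝ) ≤ ((t - 1 : ℕ) : ℝ) := hc1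
      _ = (t:ℝ) - 1 := hc2'
      _ ≤ D * lg n * lg (lg n) := htub
  -- final probability computation
  have hGsmall : ((univ.filter (fun ω => ¬ P ω)).card : ℝ)
      ≤ (lg n / (n:ℝ) ^ 3) * (Fintype.card (Fin n → NodeOrder n d) : ℝ) := by
    have h1 : ((univ.filter (fun ω => ¬ P ω)).card : ℝ) ≤ (G.card : ℝ) := by
      exact_mod_cast Finset.card_le_card hsubP
    have h2 : (n:ℝ) * (Real.exp (-c2 * ((t:ℝ)-1)) * (((n:ℝ) - 1) ^ n * (c:ℝ) ^ n))
        ≤ (lg n / (n:ℝ) ^ 3) * (((n:ℝ) - 1) ^ n * (c:ℝ) ^ n) := by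
      calc (n:ℝ) * (Real.exp (-c2 * ((t:ℝ)-1)) * (((n:ℝ) - 1) ^ n * (c:ℝ) ^ n))
          = ((n:ℝ) * Real.exp (-c2 * ((t:ℝ)-1))) * (((n:ℝ) - 1) ^ n * (c:ℝ) ^ n) := by
            ring
        _ ≤ (lg n / (n:ℝ) ^ 3) * (((n:ℝ) - 1) ^ n * (c:ℝ) ^ n) :=
            mul_le_mul_of_nonneg_right hexpsmall hB0
    rw [hΩR]
    linarith
  -- unifProb
  rw [Real.rpow_one]
  rw [unifProb]
  have hΩRpos : (0:ℝ) < (Fintype.card (Fin n → NodeOrder n d) : ℝ) := by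
    exact_mod_cast hΩpos
  rw [le_div_iff₀ hΩRpos]
  have hpart : (univ.filter P).card + (univ.filter (fun ω => ¬ P ω)).card
      = Fintype.card (Fin n → NodeOrder n d) := by
    rw [Finset.card_filter_add_card_filter_not, card_univ]
  have hpartR : ((univ.filter P).card : ℝ)
      = (Fintype.card (Fin n → NodeOrder n d) : ℝ)
        - ((univ.filter (fun ω => ¬ P ω)).card : ℝ) := by
    have := hpart
    push_cast [← this]
    ring
  rw [hpartR]
  nlinarith [hGsmall, hΩRpos]


end
end

section
/- With probability at least 1 − n^{−3}, the number of nodes v ∈ V \ {d} whose first failover edge (v, π_v(1)) is failed by the adversary (i.e., lies in F^in) is O(log n), even if the adversary fails up to γ·n inner edges for a constant γ < 1. -/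
/-!
STATEMENT 8 (Lemma 7, few failed first failover edges).

Fix a destination `d` in `K_n`.  The adversary, oblivious to the random choices,
fails a set `Fin'` of inner edges (edges not incident to `d`, no self-loops) with
`|Fin'| ≤ γ·n` for a constant `0 < γ < 1`.  Each node `v` independently chooses a
uniformly random ordering `π_v` of `V \ {d}`; `π_v(1)` denotes its first element.

Claim: with probability at least `1 - n⁻³`, the number of nodes `v ∈ V \ {d}` with
`(v, π_v(1)) ∈ Fin'` is `O(log n)`.
-/

open scoped Classical
open Finset

noncomputable section

lemma fiber_card_eq' {α β : Type*} [Fintype α] [Fintype β] [DecidableEq α] [DecidableEq β]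
    (i0 : α) (b b' : β) :
    ((Finset.univ : Finset (α ≃ β)).filter (fun π => π i0 = b)).card
      = ((Finset.univ : Finset (α ≃ β)).filter (fun π => π i0 = b')).card := by
  apply Finset.card_nbij' (fun π => π.trans (Equiv.swap b b'))
    (fun π => π.trans (Equiv.swap b b'))
  · intro π hπ
    simp only [Finset.mem_coe, Finset.mem_filter, Finset.mem_univ, true_and] at hπ ⊢
    simp [hπ]
  · intro π hπ
    simp only [Finset.mem_coe, Finset.mem_filter, Finset.mem_univ, true_and] at hπ ⊢
    simp [hπ, Equiv.swap_apply_right]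
  · intro π hπ
    ext x
    simp
  · intro π hπ
    ext x
    simp


lemma card_filter_eval_mem' {α β : Type*} [Fintype α] [Fintype β] [DecidableEq α] [DecidableEq β]
    [Nonempty β] (i0 : α) (B : Finset β) (m : ℕ) (hm : Fintype.card β = m) :
    ((Finset.univ : Finset (α ≃ β)).filter (fun π => π i0 ∈ B)).card * m
      = B.card * Fintype.card (α ≃ β) := by
  subst hm
  obtain ⟨b0⟩ := ‹Nonempty β›
  set c : ℕ := ((Finset.univ : Finset (α ≃ β)).filter (fun π => π i0 = b0)).card with hc
  have htot : Fintype.card (α ≃ β) = Fintype.card β * c := by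
    rw [← Finset.card_univ]
    rw [Finset.card_eq_sum_card_fiberwise (f := fun π : α ≃ β => π i0) (t := Finset.univ)
      (fun x _ => Finset.mem_univ _)]
    rw [show Fintype.card β * c = ∑ _b : β, c from by rw [Finset.sum_const, Finset.card_univ, smul_eq_mul]]
    exact Finset.sum_congr rfl fun b _ => fiber_card_eq' i0 b b0
  have hB : ((Finset.univ : Finset (α ≃ β)).filter (fun π => π i0 ∈ B)).card = B.card * c := by
    rw [Finset.card_eq_sum_card_fiberwise (f := fun π : α ≃ β => π i0) (t := B)
      (s := (Finset.univ : Finset (α ≃ β)).filter (fun π => π i0 ∈ B))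
      (fun x hx => (Finset.mem_filter.mp hx).2)]
    rw [show B.card * c = ∑ _b ∈ B, c from by rw [Finset.sum_const, smul_eq_mul]]
    refine Finset.sum_congr rfl fun b hb => ?_
    rw [Finset.filter_filter, hc, ← fiber_card_eq' i0 b b0]
    congr 1
    apply Finset.filter_congr
    intro π _
    simp only [and_iff_right_iff_imp]
    intro h; rw [h]; exact hb
  rw [hB, htot]; ring

lemma degree_sum_le' {n : ℕ} (d : Fin n) (F : Finset (Sym2 (Fin n)))
    (hdiag : ∀ e ∈ F, ¬ e.IsDiag) (hd : ∀ e ∈ F, d ∉ e) :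
    ∑ v ∈ Finset.univ.erase d,
        ((Finset.univ.erase d).filter (fun u => s(v, u) ∈ F)).card = 2 * F.card := by
  set s : Finset (Fin n) := Finset.univ.erase d with hs
  have h1 : ∀ v : Fin n, ((s.filter (fun u => s(v, u) ∈ F)).card : ℕ)
      = ∑ u ∈ s, ∑ e ∈ F, (if s(v,u) = e then 1 else 0) := by
    intro v
    rw [Finset.card_filter]
    exact Finset.sum_congr rfl fun u _ =>
      (Finset.sum_ite_eq F (s(v,u)) (fun _ => 1)).symm ▸ rfl
  calc ∑ v ∈ s, ((s.filter (fun u => s(v, u) ∈ F)).card)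
      = ∑ v ∈ s, ∑ u ∈ s, ∑ e ∈ F, (if s(v,u) = e then 1 else 0) := Finset.sum_congr rfl fun v _ => h1 v
    _ = ∑ e ∈ F, ∑ v ∈ s, ∑ u ∈ s, (if s(v,u) = e then 1 else 0) := by
        rw [show (∑ v ∈ s, ∑ u ∈ s, ∑ e ∈ F, (if s(v,u) = e then 1 else 0))
            = ∑ v ∈ s, ∑ e ∈ F, ∑ u ∈ s, (if s(v,u) = e then 1 else 0) from
          Finset.sum_congr rfl fun v _ => Finset.sum_comm]
        exact Finset.sum_comm
    _ = ∑ e ∈ F, 2 := by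
        refine Finset.sum_congr rfl fun e he => ?_
        induction e using Sym2.inductionOn with
        | hf a b =>
          have hab : a ≠ b := fun h => hdiag _ he (by rw [h]; exact Sym2.mk_isDiag_iff.mpr rfl)
          have had : a ≠ d := fun h => hd _ he (h ▸ Sym2.mem_mk_left a b)
          have hbd : b ≠ d := fun h => hd _ he (h ▸ Sym2.mem_mk_right a b)
          have ha : a ∈ s := Finset.mem_erase.mpr ⟨had, Finset.mem_univ _⟩
          have hb : b ∈ s := Finset.mem_erase.mpr ⟨hbd, Finset.mem_univ _⟩
          have hfil : (s ×ˢ s).filter (fun x => s(x.1, x.2) = s(a,b)) = {(a,b),(b,a)} := by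
            ext ⟨v,u⟩
            simp only [Finset.mem_filter, Finset.mem_product, Finset.mem_insert,
              Finset.mem_singleton, Sym2.eq_iff, Prod.mk.injEq]
            constructor
            · rintro ⟨_, (⟨rfl,rfl⟩|⟨rfl,rfl⟩)⟩ <;> simp
            · rintro (⟨rfl,rfl⟩|⟨rfl,rfl⟩) <;> simp [ha, hb]
          rw [← Finset.sum_product', ← Finset.card_filter, hfil,
            Finset.card_insert_of_notMem (by simp [hab, Ne.symm hab]), Finset.card_singleton]
    _ = 2 * F.card := by rw [Finset.sum_const, smul_eq_mul, mul_comm]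


theorem few_failed_first_failover_edges (γ : ℝ) (hγ0 : 0 < γ) (hγ1 : γ < 1) :
    ∃ (D : ℝ) (N : ℕ), 0 < D ∧
      ∀ n : ℕ, N ≤ n →
        ∀ (d : Fin n) (Fin' : Finset (Sym2 (Fin n))),
          (∀ e ∈ Fin', ¬ e.IsDiag) →
          -- inner edges: not incident to the destination
          (∀ e ∈ Fin', d ∉ e) →
          (Fin'.card : ℝ) ≤ γ * n →
          1 - 1 / (n : ℝ) ^ 3 ≤
            unifProb (fun ω : Fin n → NodeOrder n d =>
              (((Finset.univ.erase d).filter fun v : Fin n =>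
                  s(v, firstElem (ω v)) ∈ Fin').card : ℝ) ≤ D * lg n) := by
  classical
  refine ⟨4 + 4 * γ, max 2 ⌈Real.exp (4 * γ)⌉₊, by linarith, ?_⟩
  intro n hn d F hdiag hdmem hFcard
  have hn2 : 2 ≤ n := le_trans (le_max_left _ _) hn
  have hexpn : Real.exp (4 * γ) ≤ (n : ℝ) :=
    Nat.ceil_le.mp (le_trans (le_max_right _ _) hn)
  have hn1 : 0 < n - 1 := by omega
  have hnR : (2 : ℝ) ≤ (n : ℝ) := by exact_mod_cast hn2
  have hn1R : (1 : ℝ) ≤ (n : ℝ) - 1 := by linarith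
  set i0 : Fin (n - 1) := ⟨0, hn1⟩ with hi0
  have hcardT : Fintype.card {v : Fin n // v ≠ d} = n - 1 := by
    simp [Fintype.card_subtype_compl]
  haveI hTne : Nonempty {v : Fin n // v ≠ d} := by
    rw [← Fintype.card_pos_iff, hcardT]; omega
  have hNOne : Nonempty (NodeOrder n d) :=
    ⟨Fintype.equivOfCardEq (by simp [hcardT])⟩
  set c₀ : ℕ := Fintype.card (NodeOrder n d) with hc₀
  have hc0 : 0 < c₀ := Fintype.card_pos
  have hfe : ∀ π : NodeOrder n d, firstElem π = (π i0).1 := by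
    intro π; rw [firstElem, dif_pos hn1]
  -- degrees
  set Bv : Fin n → Finset (Fin n) :=
    fun v => (Finset.univ.erase d).filter (fun u => s(v, u) ∈ F) with hBv
  -- per-coordinate count
  have hAv : ∀ v : Fin n, v ≠ d →
      ((Finset.univ : Finset (NodeOrder n d)).filter
        (fun π => s(v, firstElem π) ∈ F)).card * (n - 1) = (Bv v).card * c₀ := by
    intro v hv
    set BT : Finset {v : Fin n // v ≠ d} := (Bv v).subtype (fun u => u ≠ d) with hBT
    have h1 : ((Finset.univ : Finset (NodeOrder n d)).filter
        (fun π => s(v, firstElem π) ∈ F))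
        = (Finset.univ.filter (fun π : NodeOrder n d => π i0 ∈ BT)) := by
      apply Finset.filter_congr
      intro π _
      rw [hfe π, hBT, Finset.mem_subtype, hBv]
      simp only [Finset.mem_filter, Finset.mem_erase, Finset.mem_univ, true_and]
      constructor
      · intro h; exact ⟨⟨(π i0).2, trivial⟩, h⟩
      · exact fun h => h.2
    have h2 : BT.card = (Bv v).card := by
      rw [hBT, Finset.card_subtype]
      congr 1
      apply Finset.filter_true_of_mem
      intro u hu
      exact (Finset.mem_erase.mp (Finset.mem_filter.mp hu).1).1
    rw [h1, ← h2]
    exact card_filter_eval_mem' i0 BT (n-1) hcardT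
  -- real-valued setup
  set c : ℝ := (c₀ : ℝ) with hc
  have hcpos : (0 : ℝ) < c := by rw [hc]; exact_mod_cast hc0
  set W : Fin n → NodeOrder n d → ℝ :=
    fun v π => if v ≠ d ∧ s(v, firstElem π) ∈ F then 2 else 1 with hW
  set E : ℝ := ∑ ω : Fin n → NodeOrder n d, ∏ v, W v (ω v) with hE
  have hWnonneg : ∀ v π, (0:ℝ) ≤ W v π := by
    intro v π; rw [hW]; dsimp only; split <;> norm_num
  -- E as product of coordinate sums
  have hEprod : E = ∏ v : Fin n, ∑ π : NodeOrder n d, W v π := by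
    rw [hE, Finset.prod_univ_sum (fun _ => Finset.univ) W, Fintype.piFinset_univ]
  -- coordinate sums
  have hcoord : ∀ v : Fin n, ∑ π : NodeOrder n d, W v π
      ≤ c * Real.exp (if v = d then 0 else (Bv v).card / ((n:ℝ) - 1)) := by
    intro v
    have hsum : ∑ π : NodeOrder n d, W v π
        = c + ((Finset.univ.filter
            (fun π : NodeOrder n d => v ≠ d ∧ s(v, firstElem π) ∈ F)).card : ℝ) := by
      calc ∑ π : NodeOrder n d, W v π
          = ∑ π : NodeOrder n d,
              ((1:ℝ) + if (v ≠ d ∧ s(v, firstElem π) ∈ F) then 1 else 0) := by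
            refine Finset.sum_congr rfl fun π _ => ?_
            rw [hW]; dsimp only; split <;> norm_num
        _ = c + _ := by
            rw [Finset.sum_add_distrib, Finset.sum_const, Finset.sum_boole, Finset.card_univ]
            simp [hc, hc₀, nsmul_eq_mul]
    rcases eq_or_ne v d with hvd | hvd
    · have : (Finset.univ.filter
          (fun π : NodeOrder n d => v ≠ d ∧ s(v, firstElem π) ∈ F)) = ∅ := by
        apply Finset.filter_false_of_mem
        intro π _ h
        exact h.1 hvd
      rw [hsum, this, if_pos hvd]
      simp [Real.exp_zero]
    · have hfil : (Finset.univ.filter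
          (fun π : NodeOrder n d => v ≠ d ∧ s(v, firstElem π) ∈ F))
          = (Finset.univ.filter (fun π : NodeOrder n d => s(v, firstElem π) ∈ F)) := by
        apply Finset.filter_congr
        intro π _
        simp [hvd]
      have hcast : (((Finset.univ.filter
          (fun π : NodeOrder n d => s(v, firstElem π) ∈ F)).card : ℝ))
          = (Bv v).card * c / ((n:ℝ) - 1) := by
        have h := hAv v hvd
        have h' : (((Finset.univ.filter
            (fun π : NodeOrder n d => s(v, firstElem π) ∈ F)).card : ℝ)) * ((n:ℝ) - 1)
            = (Bv v).card * c := by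
          have := congrArg (fun k : ℕ => (k : ℝ)) h
          push_cast at this
          rw [Nat.cast_sub (by omega)] at this
          push_cast at this
          convert this using 2
        field_simp at h' ⊢
        linarith [h']
      rw [hsum, hfil, hcast, if_neg hvd]
      have h1 : c + (Bv v).card * c / ((n:ℝ) - 1)
          = c * (1 + ((Bv v).card : ℝ) / ((n:ℝ) - 1)) := by ring
      rw [h1]
      apply mul_le_mul_of_nonneg_left _ (le_of_lt hcpos)
      have := Real.add_one_le_exp (((Bv v).card : ℝ) / ((n:ℝ) - 1))
      linarith
  -- expectation bound
  have hEbound : E ≤ c ^ n * Real.exp (4 * γ) := by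
    have h1 : E ≤ ∏ v : Fin n,
        (c * Real.exp (if v = d then 0 else (Bv v).card / ((n:ℝ) - 1))) := by
      rw [hEprod]
      apply Finset.prod_le_prod
      · intro v _
        exact Finset.sum_nonneg fun π _ => hWnonneg v π
      · intro v _
        exact hcoord v
    have h2 : ∏ v : Fin n,
        (c * Real.exp (if v = d then 0 else (Bv v).card / ((n:ℝ) - 1)))
        = c ^ n * Real.exp (∑ v : Fin n,
            (if v = d then 0 else ((Bv v).card : ℝ) / ((n:ℝ) - 1))) := by
      rw [Finset.prod_mul_distrib, Finset.prod_const, Finset.card_univ, Fintype.card_fin,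
        ← Real.exp_sum]
    have h3 : (∑ v : Fin n, (if v = d then 0 else ((Bv v).card : ℝ) / ((n:ℝ) - 1)))
        = (2 * F.card : ℝ) / ((n:ℝ) - 1) := by
      rw [← Finset.sum_erase_add _ _ (Finset.mem_univ d), if_pos rfl, add_zero]
      rw [Finset.sum_congr rfl (fun v hv => if_neg (Finset.mem_erase.mp hv).1)]
      rw [← Finset.sum_div]
      congr 1
      rw [← Nat.cast_ofNat, ← Nat.cast_mul, ← degree_sum_le' d F hdiag hdmem, Nat.cast_sum]
    have h4 : (2 * F.card : ℝ) / ((n:ℝ) - 1) ≤ 4 * γ := by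
      rw [div_le_iff₀ (by linarith)]
      nlinarith [hFcard]
    calc E ≤ _ := h1
      _ = _ := h2
      _ ≤ c ^ n * Real.exp (4 * γ) := by
          rw [h3]
          exact mul_le_mul_of_nonneg_left (Real.exp_le_exp.mpr h4) (by positivity)
  -- pointwise lower bound on bad set
  set D : ℝ := 4 + 4 * γ with hD
  set count : (Fin n → NodeOrder n d) → ℕ := fun ω =>
    ((Finset.univ.erase d).filter fun v : Fin n => s(v, firstElem (ω v)) ∈ F).card with hcount
  have hprod2 : ∀ ω : Fin n → NodeOrder n d,
      ∏ v, W v (ω v) = 2 ^ (count ω) := by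
    intro ω
    have hfil : Finset.univ.filter (fun v : Fin n => v ≠ d ∧ s(v, firstElem (ω v)) ∈ F)
        = (Finset.univ.erase d).filter (fun v : Fin n => s(v, firstElem (ω v)) ∈ F) := by
      ext v
      simp only [Finset.mem_filter, Finset.mem_erase, Finset.mem_univ, true_and]
      tauto
    rw [hW]
    rw [show (∏ v, if v ≠ d ∧ s(v, firstElem (ω v)) ∈ F then (2:ℝ) else 1)
        = ∏ v ∈ Finset.univ.filter
            (fun v : Fin n => v ≠ d ∧ s(v, firstElem (ω v)) ∈ F), (2:ℝ) from by
      rw [Finset.prod_ite, Finset.prod_const, Finset.prod_const, one_pow, mul_one]]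
    rw [hfil, Finset.prod_const]
  set bad : Finset (Fin n → NodeOrder n d) :=
    Finset.univ.filter (fun ω => ¬ ((count ω : ℝ) ≤ D * lg n)) with hbad
  have hnpos : (0:ℝ) < n := by linarith
  have hlow : ∀ ω ∈ bad, ((n:ℝ) ^ D : ℝ) ≤ ∏ v, W v (ω v) := by
    intro ω hω
    rw [hprod2 ω]
    have hgt : D * lg (n:ℝ) < (count ω : ℝ) := by
      have h := (Finset.mem_filter.mp (hbad ▸ hω)).2
      push_neg at h
      exact h
    have h2 : ((n:ℝ)) ^ D = (2:ℝ) ^ (D * lg (n:ℝ)) := by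
      rw [lg, mul_comm D, Real.rpow_mul (by norm_num : (0:ℝ) ≤ 2),
        Real.rpow_logb (by norm_num) (by norm_num) hnpos]
    calc ((n:ℝ)) ^ D = (2:ℝ) ^ (D * lg (n:ℝ)) := h2
      _ ≤ (2:ℝ) ^ ((count ω : ℝ)) :=
          Real.rpow_le_rpow_of_exponent_le (by norm_num) hgt.le
      _ = 2 ^ (count ω) := Real.rpow_natCast 2 (count ω)
  have hmarkov : (bad.card : ℝ) * (n:ℝ) ^ D ≤ E := by
    calc (bad.card : ℝ) * (n:ℝ) ^ D = ∑ _ω ∈ bad, ((n:ℝ) ^ D : ℝ) := by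
          rw [Finset.sum_const, nsmul_eq_mul]
      _ ≤ ∑ ω ∈ bad, ∏ v, W v (ω v) := Finset.sum_le_sum hlow
      _ ≤ ∑ ω : Fin n → NodeOrder n d, ∏ v, W v (ω v) :=
          Finset.sum_le_sum_of_subset_of_nonneg (Finset.subset_univ _)
            (fun ω _ _ => Finset.prod_nonneg fun v _ => hWnonneg v (ω v))
      _ = E := hE.symm
  -- conclude
  have hnR3 : (0:ℝ) < (n:ℝ) ^ 3 := by positivity
  have hbadcard : (bad.card : ℝ) * (n:ℝ) ^ 3 ≤ c ^ n := by
    have hnD : (n:ℝ) ^ 3 * Real.exp (4 * γ) ≤ (n:ℝ) ^ D := by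
      have e1 : (n:ℝ) ^ D = (n:ℝ) ^ ((3:ℝ)) * (n:ℝ) ^ ((1 + 4 * γ : ℝ)) := by
        rw [← Real.rpow_add hnpos]
        congr 1
        rw [hD]; ring
      have e2 : (n:ℝ) ^ ((3:ℝ)) = (n:ℝ) ^ (3:ℕ) := by
        rw [← Real.rpow_natCast (n:ℝ) 3]; norm_num
      have e3 : Real.exp (4 * γ) ≤ (n:ℝ) ^ ((1 + 4 * γ : ℝ)) := by
        calc Real.exp (4 * γ) ≤ (n:ℝ) := hexpn
          _ = (n:ℝ) ^ ((1:ℝ)) := (Real.rpow_one _).symm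
          _ ≤ (n:ℝ) ^ ((1 + 4 * γ : ℝ)) :=
              Real.rpow_le_rpow_of_exponent_le (by linarith) (by linarith)
      rw [e1, e2]
      exact mul_le_mul_of_nonneg_left e3 (by positivity)
    have h5 : (bad.card : ℝ) * ((n:ℝ) ^ 3 * Real.exp (4 * γ)) ≤ c ^ n * Real.exp (4 * γ) := by
      calc (bad.card : ℝ) * ((n:ℝ) ^ 3 * Real.exp (4 * γ))
          ≤ (bad.card : ℝ) * (n:ℝ) ^ D :=
            mul_le_mul_of_nonneg_left hnD (Nat.cast_nonneg _)
        _ ≤ E := hmarkov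
        _ ≤ c ^ n * Real.exp (4 * γ) := hEbound
    have hex : (0:ℝ) < Real.exp (4 * γ) := Real.exp_pos _
    nlinarith [h5, hex]
  have hcardΩ : (Fintype.card (Fin n → NodeOrder n d) : ℝ) = c ^ n := by
    rw [Fintype.card_fun, Fintype.card_fin, hc]
    push_cast
    ring
  have hcn : (0:ℝ) < c ^ n := by positivity
  show 1 - 1 / (n : ℝ) ^ 3 ≤ unifProb (fun ω : Fin n → NodeOrder n d => ((count ω : ℕ) : ℝ) ≤ D * lg n)
  rw [unifProb, hcardΩ, le_div_iff₀ hcn]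
  have hsplit : ((Finset.univ.filter
        (fun ω : Fin n → NodeOrder n d => ((count ω : ℕ) : ℝ) ≤ D * lg n)).card : ℝ)
      + (bad.card : ℝ) = c ^ n := by
    rw [hbad]
    rw [← hcardΩ, ← Finset.card_univ]
    push_cast
    rw [← Nat.cast_add]
    norm_cast
    exact Finset.card_filter_add_card_filter_not _
  have hbd : (bad.card : ℝ) ≤ c ^ n / (n:ℝ) ^ 3 := by
    rw [le_div_iff₀ hnR3]
    exact hbadcard
  have : ((Finset.univ.filter
        (fun ω : Fin n → NodeOrder n d => ((count ω : ℕ) : ℝ) ≤ D * lg n)).card : ℝ)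
      = c ^ n - bad.card := by linarith
  calc (1 - 1 / (n : ℝ) ^ 3) * c ^ n = c ^ n - c ^ n / (n:ℝ) ^ 3 := by ring
    _ ≤ c ^ n - bad.card := by
        have : (bad.card : ℝ) ≤ c ^ n / (n:ℝ) ^ 3 := hbd
        linarith
    _ = _ := by
        rw [← this]

end
end
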